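/- (Powers–Størmer inequality for α = 1/2) For positive semidefinite matrices A and B, 2·Tr(A^{1/2} B^{1/2}) ≥ Tr(A + B − |A − B|), where |M| denotes the positive square root of MᵀM. -/

import Mathlib

open Matrix

namespace Matrix.PosSemidef

open scoped ComplexOrder

/-- The positive semidefinite square root of a positive semidefinite matrix
(as defined in Mathlib of December 2024, since removed). -/
noncomputable def sqrt {n : Type*} [Fintype n] [DecidableEq n] {𝕜 : Type*} [RCLike 𝕜]
    {A : Matrix n n 𝕜} (hA : PosSemidef A) : Matrix n n 𝕜 :=
  hA.1.eigenvectorUnitary.1 * diagonal ((↑) ∘ (√·) ∘ hA.1.eigenvalues) *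
  (star hA.1.eigenvectorUnitary : Matrix n n 𝕜)

end Matrix.PosSemidef

section SqrtPort

open scoped MatrixOrder ComplexOrder

variable {m : Type*} [Fintype m] [DecidableEq m] {𝕜 : Type*} [RCLike 𝕜]

lemma Matrix.PosSemidef.sqrt_eq_cfcSqrt {A : Matrix m m 𝕜} (hA : A.PosSemidef) :
    hA.sqrt = CFC.sqrt A := by
  rw [CFC.sqrt_eq_cfc, cfc_nnreal_eq_real _ A, hA.1.cfc_eq]
  simp only [IsHermitian.cfc, Unitary.conjStarAlgAut_apply, Matrix.PosSemidef.sqrt]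
  congr 2
  ext i j
  simp [diagonal_apply, hA.eigenvalues_nonneg]

lemma Matrix.PosSemidef.sqrt_mul_self {A : Matrix m m 𝕜} (hA : A.PosSemidef) :
    hA.sqrt * hA.sqrt = A := by
  rw [hA.sqrt_eq_cfcSqrt]
  exact CFC.sqrt_mul_sqrt_self A hA.nonneg

lemma Matrix.PosSemidef.posSemidef_sqrt {A : Matrix m m 𝕜} (hA : A.PosSemidef) :
    hA.sqrt.PosSemidef := by
  rw [hA.sqrt_eq_cfcSqrt]
  exact (CFC.sqrt_nonneg A).posSemidef

lemma Matrix.PosSemidef.eq_sqrt_of_sq_eq {A B : Matrix m m 𝕜} (hA : A.PosSemidef)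
    (hB : B.PosSemidef) (h : A ^ 2 = B) : A = hB.sqrt := by
  rw [hB.sqrt_eq_cfcSqrt]
  exact (CFC.sqrt_unique (by rw [← h, pow_two]) hA.nonneg).symm

end SqrtPort

section Aux

variable {n : ℕ}

private lemma psd_diag_nonneg {M : Matrix (Fin n) (Fin n) ℝ} (h : M.PosSemidef) (i : Fin n) :
    0 ≤ M i i := h.diag_nonneg

/-- `|X| - X` and `|X| + X` are PSD for symmetric `X`. -/
private lemma abs_psd (X : Matrix (Fin n) (Fin n) ℝ) (hX : X.IsHermitian) :
    ((Matrix.posSemidef_conjTranspose_mul_self X).sqrt - X).PosSemidef ∧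
    ((Matrix.posSemidef_conjTranspose_mul_self X).sqrt + X).PosSemidef := by
  set V : Matrix (Fin n) (Fin n) ℝ := ↑hX.eigenvectorUnitary with hV
  have hV2 : star V * V = 1 := mem_unitaryGroup_iff'.mp hX.eigenvectorUnitary.2
  set μ := hX.eigenvalues with hμ
  have hspec : X = V * diagonal μ * star V := by
    have := hX.spectral_theorem
    simpa [RCLike.ofReal_real_eq_id] using this
  have cancel : ∀ (N : Matrix (Fin n) (Fin n) ℝ), star V * (V * N) = N := fun N => by
    rw [← Matrix.mul_assoc, hV2, Matrix.one_mul]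
  have conj_mul : ∀ M N : Matrix (Fin n) (Fin n) ℝ,
      (V * M * star V) * (V * N * star V) = V * (M * N) * star V := by
    intro M N
    simp only [Matrix.mul_assoc, cancel]
  set M := V * diagonal (fun i => |μ i|) * star V with hM
  have hMpsd : M.PosSemidef := by
    have hd : PosSemidef (diagonal fun i => |μ i|) :=
      PosSemidef.diagonal (fun i => abs_nonneg _)
    exact hd.mul_mul_conjTranspose_same V
  have hMsq : M ^ 2 = Xᴴ * X := by
    have hXX : Xᴴ * X = X * X := by rw [hX.eq]
    rw [hXX, pow_two, hM, conj_mul]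
    conv_rhs => rw [hspec]
    rw [conj_mul, diagonal_mul_diagonal, diagonal_mul_diagonal]
    have habs : (fun i => |μ i| * |μ i|) = fun i => μ i * μ i :=
      funext fun i => abs_mul_abs_self (μ i)
    rw [habs]
  have hMeq : M = (Matrix.posSemidef_conjTranspose_mul_self X).sqrt :=
    hMpsd.eq_sqrt_of_sq_eq _ hMsq
  constructor
  · have h1 : M - X = V * diagonal (fun i => |μ i| - μ i) * star V := by
      conv_lhs => rw [hM, hspec]
      rw [← Matrix.sub_mul, ← Matrix.mul_sub, diagonal_sub]
    rw [← hMeq, h1]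
    have hd : PosSemidef (diagonal fun i => |μ i| - μ i) :=
      PosSemidef.diagonal (fun i => sub_nonneg.2 (le_abs_self _))
    simpa [Matrix.star_eq_conjTranspose] using hd.mul_mul_conjTranspose_same V
  · have h1 : M + X = V * diagonal (fun i => |μ i| + μ i) * star V := by
      conv_lhs => rw [hM, hspec]
      rw [← Matrix.add_mul, ← Matrix.mul_add, diagonal_add]
    rw [← hMeq, h1]
    have hd : PosSemidef (diagonal fun i => |μ i| + μ i) :=
      PosSemidef.diagonal (fun i => show (0:ℝ) ≤ |μ i| + μ i by
        have := neg_abs_le (μ i); linarith)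
    simpa [Matrix.star_eq_conjTranspose] using hd.mul_mul_conjTranspose_same V

end Aux

/-- Powers–Størmer inequality for `α = 1/2`:
`2 Tr(A^{1/2} B^{1/2}) ≥ Tr(A + B − |A − B|)` for PSD matrices `A, B`,
where `|M| = (MᵀM)^{1/2}`. -/
theorem powers_stormer {n : ℕ} (A B : Matrix (Fin n) (Fin n) ℝ)
    (hA : A.PosSemidef) (hB : B.PosSemidef) :
    (A + B - (Matrix.posSemidef_conjTranspose_mul_self (A - B)).sqrt).trace
      ≤ 2 * (hA.sqrt * hB.sqrt).trace := by
  set S := hA.sqrt with hSdef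
  set T := hB.sqrt with hTdef
  have hS : S * S = A := hA.sqrt_mul_self
  have hT : T * T = B := hB.sqrt_mul_self
  have hSp : S.PosSemidef := hA.posSemidef_sqrt
  have hTp : T.PosSemidef := hB.posSemidef_sqrt
  set X := A - B with hXdef
  have hX : X.IsHermitian := hA.1.sub hB.1
  set Q := (Matrix.posSemidef_conjTranspose_mul_self (A - B)).sqrt with hQdef
  obtain ⟨hQm, hQp⟩ := abs_psd X hX
  set R := S - T with hRdef
  have hR : R.IsHermitian := hSp.1.sub hTp.1
  set K := S + T with hKdef
  have hKmR : (K - R).PosSemidef := by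
    have h2 : K - R = T + T := by rw [hKdef, hRdef]; abel
    rw [h2]; exact hTp.add hTp
  have hKpR : (K + R).PosSemidef := by
    have h2 : K + R = S + S := by rw [hKdef, hRdef]; abel
    rw [h2]; exact hSp.add hSp
  have h2X : R * K + K * R = X + X := by
    have h3 : R * K + K * R = (S * S - T * T) + (S * S - T * T) := by
      rw [hRdef, hKdef]; noncomm_ring
    rw [h3, hS, hT]
  -- conjugate everything by the eigenvector unitary of R
  set U : Matrix (Fin n) (Fin n) ℝ := ↑hR.eigenvectorUnitary with hUdef
  have hU1 : U * star U = 1 := mem_unitaryGroup_iff.mp hR.eigenvectorUnitary.2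
  set r := hR.eigenvalues with hrdef
  have hRdiag : star U * R * U = diagonal r := by
    have := hR.conjStarAlgAut_star_eigenvectorUnitary
    simpa [RCLike.ofReal_real_eq_id] using this
  have cancel : ∀ (N : Matrix (Fin n) (Fin n) ℝ), U * (star U * N) = N := fun N => by
    rw [← Matrix.mul_assoc, hU1, Matrix.one_mul]
  have conj_mul : ∀ M N : Matrix (Fin n) (Fin n) ℝ,
      (star U * M * U) * (star U * N * U) = star U * (M * N) * U := by
    intro M N
    simp only [Matrix.mul_assoc, cancel]
  have trace_conj : ∀ M : Matrix (Fin n) (Fin n) ℝ, (star U * M * U).trace = M.trace := by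
    intro M
    rw [Matrix.trace_mul_comm, ← Matrix.mul_assoc, hU1, Matrix.one_mul]
  have conj_psd : ∀ {M : Matrix (Fin n) (Fin n) ℝ}, M.PosSemidef →
      (star U * M * U).PosSemidef := by
    intro M hM
    simpa [Matrix.star_eq_conjTranspose] using hM.conjTranspose_mul_mul_same U
  set K' := star U * K * U with hK'def
  set Q' := star U * Q * U with hQ'def
  set X' := star U * X * U with hX'def
  -- pointwise inequality on diagonal entries
  have key : ∀ i, r i ^ 2 ≤ Q' i i := by
    intro i
    have hKr : |r i| ≤ K' i i := by
      have h1 := psd_diag_nonneg (conj_psd hKmR) i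
      have h2 := psd_diag_nonneg (conj_psd hKpR) i
      rw [Matrix.mul_sub, Matrix.sub_mul, ← hK'def, hRdiag] at h1
      rw [Matrix.mul_add, Matrix.add_mul, ← hK'def, hRdiag] at h2
      simp only [Matrix.sub_apply, Matrix.add_apply, diagonal_apply_eq] at h1 h2
      rw [abs_le]; constructor <;> linarith
    have hQX : |X' i i| ≤ Q' i i := by
      have h1 := psd_diag_nonneg (conj_psd hQm) i
      have h2 := psd_diag_nonneg (conj_psd hQp) i
      rw [Matrix.mul_sub, Matrix.sub_mul, ← hQ'def, ← hX'def] at h1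
      rw [Matrix.mul_add, Matrix.add_mul, ← hQ'def, ← hX'def] at h2
      simp only [Matrix.sub_apply, Matrix.add_apply] at h1 h2
      rw [abs_le]; constructor <;> linarith
    have hXK : X' i i = r i * K' i i := by
      have h1 : X' + X' = diagonal r * K' + K' * diagonal r := by
        calc X' + X'
            = star U * (X + X) * U := by
              rw [hX'def, Matrix.mul_add, Matrix.add_mul]
          _ = star U * (R * K + K * R) * U := by rw [h2X]
          _ = star U * (R * K) * U + star U * (K * R) * U := by
              rw [Matrix.mul_add, Matrix.add_mul]
          _ = diagonal r * K' + K' * diagonal r := by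
              rw [← conj_mul, ← conj_mul, hRdiag, ← hK'def]
      have h2 := congr_arg (fun (M : Matrix (Fin n) (Fin n) ℝ) => M i i) h1
      simp only [Matrix.add_apply, diagonal_mul, mul_diagonal] at h2
      linarith
    have hKnn : 0 ≤ K' i i := le_trans (abs_nonneg _) hKr
    calc r i ^ 2 = |r i| * |r i| := by rw [abs_mul_abs_self, pow_two]
      _ ≤ |r i| * K' i i := mul_le_mul_of_nonneg_left hKr (abs_nonneg _)
      _ = |r i * K' i i| := by rw [abs_mul, abs_of_nonneg hKnn]
      _ = |X' i i| := by rw [hXK]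
      _ ≤ Q' i i := hQX
  -- trace computations
  have htrRR : (R * R).trace = ∑ i, r i ^ 2 := by
    have h1 : (R * R).trace = (star U * (R * R) * U).trace := (trace_conj _).symm
    rw [h1, ← conj_mul, hRdiag, diagonal_mul_diagonal, Matrix.trace_diagonal]
    congr 1; funext i; rw [pow_two]
  have htrQ : Q.trace = ∑ i, Q' i i := by
    rw [← trace_conj Q, ← hQ'def]
    rfl
  have hsum : ∑ i, r i ^ 2 ≤ ∑ i, Q' i i := Finset.sum_le_sum fun i _ => key i
  have hmain : (R * R).trace ≤ Q.trace := by rw [htrRR, htrQ]; exact hsum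
  have hRRtr : (R * R).trace = A.trace + B.trace - 2 * (S * T).trace := by
    have h3 : R * R = S * S + T * T - S * T - T * S := by rw [hRdef]; noncomm_ring
    rw [h3, Matrix.trace_sub, Matrix.trace_sub, Matrix.trace_add, hS, hT,
      Matrix.trace_mul_comm T S]
    ring
  have hgoal : (A + B - Q).trace = A.trace + B.trace - Q.trace := by
    rw [Matrix.trace_sub, Matrix.trace_add]
  rw [hgoal]
  linarith
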